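/- Tabulation hashing with uniformly random tables is 3-independent: if T₁, T₂ : Fin N → ZMod m are chosen independently and uniformly at random, then for any three distinct keys x₁, x₂, x₃ (each a pair of characters in Fin N × Fin N) and any hash values y₁, y₂, y₃ ∈ ZMod m, the probability that h(xᵢ) = yᵢ for all i equals m^{-3}, where h(a,b) = T₁(a) + T₂(b) (group operation in ZMod m, modeling XOR). -/

import Mathlib

open scoped Classical

section Aux

variable (N m : ℕ) [NeZero m] (x : Fin 3 → Fin N × Fin N)

/-- The hashing map as an additive group homomorphism. -/
def tabPhi : ((Fin N → ZMod m) × (Fin N → ZMod m)) →+ (Fin 3 → ZMod m) where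
  toFun T := fun i => T.1 (x i).1 + T.2 (x i).2
  map_zero' := by ext i; simp
  map_add' a b := by ext i; simp [Prod.fst_add, Prod.snd_add]; ring

lemma tabPhi_single (hx : Function.Injective x) (i : Fin 3) (t : ZMod m) :
    ∃ T, tabPhi N m x T = fun j => if j = i then t else 0 := by
  by_cases hA : ∀ j, j ≠ i → (x j).1 ≠ (x i).1
  · refine ⟨((fun c => if c = (x i).1 then t else 0), 0), ?_⟩
    ext j
    by_cases hji : j = i
    · subst hji; simp [tabPhi]
    · simp [tabPhi, hji, hA j hji]
  · by_cases hB : ∀ j, j ≠ i → (x j).2 ≠ (x i).2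
    · refine ⟨(0, (fun c => if c = (x i).2 then t else 0)), ?_⟩
      ext j
      by_cases hji : j = i
      · subst hji; simp [tabPhi]
      · simp [tabPhi, hji, hB j hji]
    · push_neg at hA hB
      obtain ⟨j, hji, hja⟩ := hA
      obtain ⟨k, hki, hkb⟩ := hB
      -- x j shares first char with x i, x k shares second char with x i
      have hbj : (x j).2 ≠ (x i).2 := by
        intro h
        exact hji (hx (Prod.ext hja h))
      have hak : (x k).1 ≠ (x i).1 := by
        intro h
        exact hki (hx (Prod.ext h hkb))
      have hjk : j ≠ k := by
        intro h; subst h; exact hak hja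
      refine ⟨((fun c => if c = (x i).1 then t else 0),
               (fun c => if c = (x j).2 then -t else 0)), ?_⟩
      ext l
      have hl : l = i ∨ l = j ∨ l = k := by
        have h1 := i.isLt; have h2 := j.isLt; have h3 := k.isLt; have h4 := l.isLt
        have e1 : i.val ≠ j.val := fun h => hji (Fin.ext h.symm)
        have e2 : i.val ≠ k.val := fun h => hki (Fin.ext h.symm)
        have e3 : j.val ≠ k.val := fun h => hjk (Fin.ext h)
        have : l.val = i.val ∨ l.val = j.val ∨ l.val = k.val := by omega
        rcases this with h | h | h
        · exact Or.inl (Fin.ext h)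
        · exact Or.inr (Or.inl (Fin.ext h))
        · exact Or.inr (Or.inr (Fin.ext h))
      by_cases hli : l = i
      · subst hli; simp [tabPhi, Ne.symm hbj]
      · by_cases hlj : l = j
        · subst hlj; simp [tabPhi, hja, hli]
        · have hlk : l = k := by tauto
          subst hlk
          have hbkj : (x l).2 ≠ (x j).2 := fun h => hbj (h.symm.trans hkb)
          simp [tabPhi, hak, hbkj, hli]

lemma tabPhi_surjective (hx : Function.Injective x) :
    Function.Surjective (tabPhi N m x) := by
  intro y
  have h := fun i => tabPhi_single N m x hx i (y i)
  choose T hT using h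
  refine ⟨∑ i, T i, ?_⟩
  rw [map_sum]
  ext j
  rw [Finset.sum_apply]
  simp only [hT]
  simp [Finset.sum_ite_eq' Finset.univ j y]

end Aux

set_option maxHeartbeats 1000000 in
theorem tabulation_three_independent (N m : ℕ) (hN : 3 ≤ N) [NeZero m]
    (x : Fin 3 → Fin N × Fin N) (hx : Function.Injective x)
    (y : Fin 3 → ZMod m) :
    ((Finset.univ.filter
        (fun T : (Fin N → ZMod m) × (Fin N → ZMod m) =>
          ∀ i, T.1 (x i).1 + T.2 (x i).2 = y i)).card : ℚ) /
      (Fintype.card ((Fin N → ZMod m) × (Fin N → ZMod m)) : ℚ) = 1 / (m : ℚ) ^ 3 := by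
  set Φ := tabPhi N m x with hΦ
  obtain ⟨T₀, hT₀⟩ := tabPhi_surjective N m x hx y
  -- filter condition is Φ T = y
  have hcond : ∀ T : (Fin N → ZMod m) × (Fin N → ZMod m),
      (∀ i, T.1 (x i).1 + T.2 (x i).2 = y i) ↔ Φ T = y := by
    intro T
    constructor
    · intro h; ext i; exact h i
    · intro h i; exact congrFun h i
  -- fiber card = card of kernel
  have hfiber : (Finset.univ.filter
      (fun T : (Fin N → ZMod m) × (Fin N → ZMod m) =>
        ∀ i, T.1 (x i).1 + T.2 (x i).2 = y i)).card = Nat.card Φ.ker := by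
    rw [Nat.card_eq_fintype_card]
    rw [← Fintype.card_subtype]
    refine Fintype.card_congr ?_
    refine { toFun := fun s => ⟨s.1 - T₀, ?_⟩, invFun := fun k => ⟨T₀ + k.1, ?_⟩,
             left_inv := ?_, right_inv := ?_ }
    · have hs := (hcond s.1).1 s.2
      simp [AddMonoidHom.mem_ker, map_sub, hs, hT₀]
      rw [hΦ, hT₀, sub_self]
    · have hk := k.2
      rw [AddMonoidHom.mem_ker] at hk
      refine (hcond _).2 ?_
      rw [map_add, hT₀, hk, add_zero]
    · intro s; ext : 1; simp
    · intro k; ext : 1; simp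
  -- total card
  have htot : (Fintype.card ((Fin N → ZMod m) × (Fin N → ZMod m)) : ℕ)
      = m ^ 3 * Nat.card Φ.ker := by
    have h1 : Nat.card ((Fin N → ZMod m) × (Fin N → ZMod m))
        = Nat.card (((Fin N → ZMod m) × (Fin N → ZMod m)) ⧸ Φ.ker) * Nat.card Φ.ker :=
      AddSubgroup.card_eq_card_quotient_mul_card_addSubgroup Φ.ker
    have h2 : Nat.card (((Fin N → ZMod m) × (Fin N → ZMod m)) ⧸ Φ.ker)
        = Nat.card (Fin 3 → ZMod m) :=
      Nat.card_congr (QuotientAddGroup.quotientKerEquivOfSurjective Φ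
        (tabPhi_surjective N m x hx))
    have h3 : Nat.card (Fin 3 → ZMod m) = m ^ 3 := by
      simp [Nat.card_eq_fintype_card, ZMod.card]
    rw [Nat.card_eq_fintype_card] at h1
    rw [h1, h2, h3]
  rw [hfiber, htot]
  have hker : (0:ℚ) < Nat.card Φ.ker := by
    have : 0 < Nat.card Φ.ker := Nat.card_pos
    exact_mod_cast this
  have hm : (0:ℚ) < (m:ℚ) ^ 3 := by
    have : 0 < m := Nat.pos_of_ne_zero (NeZero.ne m)
    positivity
  have hc : ((Nat.card Φ.ker : ℚ)) ≠ 0 := hker.ne'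
  push_cast
  rw [mul_comm, ← div_div, div_self hc]
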